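/- arXiv:0710.5838 — 4 statements merged into one kernel-verified Lean document; each statement's English description precedes it below -/
import Mathlib

section
/- Every coset of a subgroup of D is cut out by generating equations: for every subgroup H of D = {−1,+1}^m and every a ∈ D, letting L = {α ∈ Fin m → ZMod 2 : X^α(h) = 1 for all h ∈ H} (which is a subgroup of the additive group (ZMod 2)^m), one has a • H = {t ∈ D : X^α(t) = X^α(a) for all α ∈ L}. -/
open Pointwise

/-- The monomial `X^γ` on the full factorial design `D = {-1,+1}^m`:
`X^γ(t) = ∏_{i : γ i = 1} t i`. -/
def Xmon {m : ℕ} (γ : Fin m → ZMod 2) (t : Fin m → ℤˣ) : ℤˣ :=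
  ∏ i ∈ Finset.univ.filter (fun i => γ i = 1), t i

def χ : ℤˣ →* Multiplicative (ZMod 2) where
  toFun u := Multiplicative.ofAdd (if u = 1 then 0 else 1)
  map_one' := by decide
  map_mul' := by decide

lemma chi_inj : Function.Injective χ := by decide

lemma zmod2_cases : ∀ c : ZMod 2, c = 0 ∨ c = 1 := by decide

lemma zmod2_neg : ∀ c : ZMod 2, -c = c := by decide

/-- additive coordinates -/
def Φ {m : ℕ} (t : Fin m → ℤˣ) : Fin m → ZMod 2 :=
  fun i => Multiplicative.toAdd (χ (t i))

lemma Φ_mul {m : ℕ} (t s : Fin m → ℤˣ) : Φ (t * s) = Φ t + Φ s := by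
  funext i
  simp [Φ, Pi.mul_apply, map_mul]

lemma Φ_inj {m : ℕ} : Function.Injective (Φ (m := m)) := by
  intro t s h
  funext i
  exact chi_inj (Multiplicative.toAdd.injective (congrFun h i))

lemma key {m : ℕ} (α : Fin m → ZMod 2) (t : Fin m → ℤˣ) :
    Multiplicative.toAdd (χ (Xmon α t)) = ∑ i, α i * Φ t i := by
  rw [Xmon, map_prod, toAdd_prod, Finset.sum_filter]
  refine Finset.sum_congr rfl fun i _ => ?_
  have : ∀ c : ZMod 2, ∀ x : ZMod 2, (if c = 1 then x else 0) = c * x := by decide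
  rw [← this]; rfl

lemma Xmon_eq_one_iff {m : ℕ} (α : Fin m → ZMod 2) (t : Fin m → ℤˣ) :
    Xmon α t = 1 ↔ ∑ i, α i * Φ t i = 0 := by
  rw [← key]
  constructor
  · intro h; rw [h]; rfl
  · intro h
    apply chi_inj
    apply Multiplicative.toAdd.injective
    rw [h]; rfl

lemma Xmon_mul {m : ℕ} (α : Fin m → ZMod 2) (t s : Fin m → ℤˣ) :
    Xmon α (t * s) = Xmon α t * Xmon α s := by
  simp [Xmon, Finset.prod_mul_distrib]

lemma Xmon_eq_iff {m : ℕ} (α : Fin m → ZMod 2) (t a : Fin m → ℤˣ) :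
    Xmon α t = Xmon α a ↔ Xmon α (t * a) = 1 := by
  rw [Xmon_mul]
  constructor
  · intro h; rw [h]
    have : ∀ u : ℤˣ, u * u = 1 := by decide
    exact this _
  · intro h
    have h2 : ∀ u v : ℤˣ, u * v = 1 → u = v := by decide
    exact h2 _ _ h

/-- Every coset of a subgroup of `D = {-1,+1}^m` is cut out by generating
equations: with `L = {α : X^α(h) = 1 for all h ∈ H}` (a subgroup of `(ZMod 2)^m`),
one has `a • H = {t : X^α(t) = X^α(a) for all α ∈ L}`. -/
theorem coset_eq_gen_eq (m : ℕ) (H : Subgroup (Fin m → ℤˣ)) (a : Fin m → ℤˣ) :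
    (∃ L : AddSubgroup (Fin m → ZMod 2),
        (L : Set (Fin m → ZMod 2)) = {α | ∀ h ∈ H, Xmon α h = 1}) ∧
    a • (H : Set (Fin m → ℤˣ)) =
      {t | ∀ α : Fin m → ZMod 2, (∀ h ∈ H, Xmon α h = 1) → Xmon α t = Xmon α a} := by
  constructor
  · refine ⟨{ carrier := {α | ∀ h ∈ H, Xmon α h = 1},
              add_mem' := ?_, zero_mem' := ?_, neg_mem' := ?_ }, rfl⟩
    · intro α β hα hβ h hH
      have hα' := (Xmon_eq_one_iff α h).mp (hα h hH)
      have hβ' := (Xmon_eq_one_iff β h).mp (hβ h hH)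
      rw [Xmon_eq_one_iff]
      simp only [Pi.add_apply, add_mul]
      rw [Finset.sum_add_distrib, hα', hβ', add_zero]
    · intro h hH
      rw [Xmon_eq_one_iff]
      simp
    · intro α hα h hH
      have : -α = α := by
        funext i
        exact zmod2_neg _
      rw [this]; exact hα h hH
  · ext t
    simp only [Set.mem_smul_set, Set.mem_setOf_eq]
    constructor
    · rintro ⟨h, hH, rfl⟩ α hα
      have hsm : a • h = a * h := by funext i; exact (by decide : ∀ u v : ℤˣ, u • v = u * v) _ _
      rw [hsm, Xmon_mul, hα h hH, mul_one]
    · intro hcond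
      haveI : Fact (Nat.Prime 2) := ⟨by norm_num⟩
      set K : Submodule (ZMod 2) (Fin m → ZMod 2) :=
        { carrier := Φ '' (H : Set (Fin m → ℤˣ))
          add_mem' := by
            rintro _ _ ⟨x, hx, rfl⟩ ⟨y, hy, rfl⟩
            exact ⟨x * y, mul_mem hx hy, Φ_mul x y⟩
          zero_mem' := ⟨1, one_mem H, by funext i; rfl⟩
          smul_mem' := by
            rintro c _ ⟨x, hx, rfl⟩
            rcases zmod2_cases c with rfl | rfl
            · rw [zero_smul]; exact ⟨1, one_mem H, by funext i; rfl⟩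
            · rw [one_smul]; exact ⟨x, hx, rfl⟩ } with hK
      have hmem : Φ (t * a) ∈ K := by
        by_contra hv
        set v := Φ (t * a)
        have hq : (Submodule.Quotient.mk v : (Fin m → ZMod 2) ⧸ K) ≠ 0 := by
          simpa [Submodule.Quotient.mk_eq_zero] using hv
        obtain ⟨f, hf⟩ : ∃ f : Module.Dual (ZMod 2) ((Fin m → ZMod 2) ⧸ K),
            f (Submodule.Quotient.mk v) ≠ 0 := by
          by_contra hall
          push_neg at hall
          exact hq ((Module.forall_dual_apply_eq_zero_iff (ZMod 2) _).mp hall)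
        set g : (Fin m → ZMod 2) →ₗ[ZMod 2] ZMod 2 := f.comp (K.mkQ) with hg
        have hgK : ∀ w ∈ K, g w = 0 := by
          intro w hw
          simp [hg, Submodule.mkQ_apply, (Submodule.Quotient.mk_eq_zero K).mpr hw]
        have hgv : g v ≠ 0 := hf
        set α : Fin m → ZMod 2 := fun i => g (Pi.single i (1 : ZMod 2)) with hα
        have hg_eq : ∀ w : Fin m → ZMod 2, g w = ∑ i, α i * w i := by
          intro w
          have hw : w = ∑ i, Pi.single i (w i) := (Finset.univ_sum_single w).symm
          conv_lhs => rw [hw]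
          rw [map_sum]
          refine Finset.sum_congr rfl fun i _ => ?_
          have hsingle : (Pi.single i (w i) : Fin m → ZMod 2) = w i • (Pi.single i (1 : ZMod 2) : Fin m → ZMod 2) := by
            rw [← Pi.single_smul, smul_eq_mul, mul_one]
          rw [hsingle, map_smul, smul_eq_mul, mul_comm]
        have hαL : ∀ h ∈ H, Xmon α h = 1 := by
          intro h hH
          rw [Xmon_eq_one_iff, ← hg_eq]
          exact hgK _ ⟨h, hH, rfl⟩
        have hfin := hcond α hαL
        rw [Xmon_eq_iff, Xmon_eq_one_iff, ← hg_eq] at hfin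
        exact hgv hfin
      obtain ⟨h, hH, hΦ⟩ := hmem
      have hh : h = t * a := Φ_inj hΦ
      subst hh
      refine ⟨t * a, hH, ?_⟩
      have h2 : ∀ u : ℤˣ, u * u = 1 := by decide
      have hsm : a • (t * a) = a * (t * a) := by funext i; exact (by decide : ∀ u v : ℤˣ, u • v = u * v) _ _
      rw [hsm]
      funext i
      simp only [Pi.mul_apply]
      rw [mul_comm (a i) (t i * a i), mul_assoc, h2, mul_one]
end

section
/- A nonempty fraction F ⊆ D = {−1,+1}^m is a coset of a subgroup of D if and only if there exist a subgroup L of the additive group (ZMod 2)^m and a map e : L → ℤˣ such that for every t ∈ D, (1/|L|) · Σ_{α ∈ L} (e(α) · X^α(t) : ℝ) equals 1 if t ∈ F and 0 otherwise. (Equivalence of the coset characterization and the indicator-function characterization of regular fractions.) -/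
open Pointwise
open scoped Classical

noncomputable def epsZ : ℤˣ → ZMod 2 := fun u => if u = 1 then 0 else 1

lemma epsZ_add (u v : ℤˣ) : epsZ (u * v) = epsZ u + epsZ v := by
  rcases Int.units_eq_one_or u with rfl | rfl <;>
    rcases Int.units_eq_one_or v with rfl | rfl <;> simp [epsZ] <;> decide

lemma epsZ_inj {u v : ℤˣ} (h : epsZ u = epsZ v) : u = v := by
  rcases Int.units_eq_one_or u with rfl | rfl <;>
    rcases Int.units_eq_one_or v with rfl | rfl <;> simp_all [epsZ] <;> revert h <;> decide

lemma epsZ_one : epsZ 1 = 0 := by simp [epsZ]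

lemma epsZ_eq_zero_iff {u : ℤˣ} : epsZ u = 0 ↔ u = 1 :=
  ⟨fun h => epsZ_inj (h.trans epsZ_one.symm), fun h => h ▸ epsZ_one⟩

lemma epsZ_prod {ι : Type*} (s : Finset ι) (t : ι → ℤˣ) :
    epsZ (∏ i ∈ s, t i) = ∑ i ∈ s, epsZ (t i) := by
  classical
  induction s using Finset.induction with
  | empty => simp [epsZ_one]
  | insert _ _ h ih => simp [Finset.prod_insert h, Finset.sum_insert h, epsZ_add, ih]

noncomputable def Bf (m : ℕ) : LinearMap.BilinForm (ZMod 2) (Fin m → ZMod 2) :=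
  LinearMap.mk₂ (ZMod 2) (fun x y => ∑ i, x i * y i)
    (by intros; simp [add_mul, Finset.sum_add_distrib])
    (by intros; simp only [smul_eq_mul, Finset.mul_sum];
        exact Finset.sum_congr rfl fun i _ => by simp [Pi.smul_apply]; ring)
    (by intros; simp [mul_add, Finset.sum_add_distrib])
    (by intros; simp only [smul_eq_mul, Finset.mul_sum];
        exact Finset.sum_congr rfl fun i _ => by simp [Pi.smul_apply]; ring)

lemma Bf_apply (m : ℕ) (x y : Fin m → ZMod 2) : Bf m x y = ∑ i, x i * y i := rfl

lemma Bf_symm (m : ℕ) (x y : Fin m → ZMod 2) : Bf m x y = Bf m y x := by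
  simp only [Bf, LinearMap.mk₂_apply]
  exact Finset.sum_congr rfl fun i _ => mul_comm _ _

lemma Bf_nondeg (m : ℕ) : (Bf m).Nondegenerate := by
  refine (LinearMap.IsRefl.nondegenerate_iff_separatingLeft (fun x y h => by rwa [Bf_symm])).mpr ?_
  intro x hx
  funext i
  have := hx (Pi.single i 1)
  simpa [Bf, Pi.single_apply, Finset.sum_ite_eq'] using this

lemma Bf_refl (m : ℕ) : (Bf m).IsRefl := fun x y h => by rwa [Bf_symm]

lemma zmod2_cases_s8 (x : ZMod 2) : x = 0 ∨ x = 1 := by revert x; decide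

lemma epsZ_Xmon {m : ℕ} (γ : Fin m → ZMod 2) (t : Fin m → ℤˣ) :
    epsZ (Xmon γ t) = Bf m γ (fun i => epsZ (t i)) := by
  rw [Xmon, epsZ_prod, Bf_apply, Finset.sum_filter]
  refine Finset.sum_congr rfl fun i _ => ?_
  rcases zmod2_cases_s8 (γ i) with h | h <;> simp [h]

lemma Xmon_eq_one_iff_s8 {m : ℕ} (γ : Fin m → ZMod 2) (t : Fin m → ℤˣ) :
    Xmon γ t = 1 ↔ Bf m γ (fun i => epsZ (t i)) = 0 := by
  rw [← epsZ_Xmon, epsZ_eq_zero_iff]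

lemma Xmon_mul_right {m : ℕ} (γ : Fin m → ZMod 2) (s t : Fin m → ℤˣ) :
    Xmon γ (s * t) = Xmon γ s * Xmon γ t := by
  simp [Xmon, Finset.prod_mul_distrib]

lemma Xmon_add {m : ℕ} (γ δ : Fin m → ZMod 2) (t : Fin m → ℤˣ) :
    Xmon (γ + δ) t = Xmon γ t * Xmon δ t := by
  apply epsZ_inj
  rw [epsZ_add, epsZ_Xmon, epsZ_Xmon, epsZ_Xmon, map_add, LinearMap.add_apply]

lemma Xmon_one {m : ℕ} (γ : Fin m → ZMod 2) : Xmon γ (1 : Fin m → ℤˣ) = 1 := by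
  simp [Xmon]

lemma unit_self_mul {m : ℕ} (t : Fin m → ℤˣ) : t * t = 1 := by
  funext i; exact Int.units_mul_self (t i)

lemma unit_self_inv {m : ℕ} (t : Fin m → ℤˣ) : t⁻¹ = t := by
  funext i; simp [Pi.inv_apply, Int.units_inv_eq_self]

lemma unit_cast_eq_one {u : ℤˣ} : ((u : ℤ) : ℝ) = 1 ↔ u = 1 := by
  rcases Int.units_eq_one_or u with rfl | rfl <;> norm_num

/-- sum of ±1's over a finset equals the cardinality iff all are 1 -/
lemma sum_pm_eq_card {ι : Type*} (s : Finset ι) (f : ι → ℤˣ)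
    (h : ∑ i ∈ s, ((f i : ℤ) : ℝ) = s.card) : ∀ i ∈ s, f i = 1 := by
  have h0 : ∑ i ∈ s, (1 - ((f i : ℤ) : ℝ)) = 0 := by
    rw [Finset.sum_sub_distrib, h]; simp
  have hnn : ∀ i ∈ s, (0:ℝ) ≤ 1 - ((f i : ℤ) : ℝ) := fun i _ => by
    rcases Int.units_eq_one_or (f i) with hf | hf <;> simp [hf] <;> norm_num
  intro i hi
  have := (Finset.sum_eq_zero_iff_of_nonneg hnn).mp h0 i hi
  rw [← unit_cast_eq_one]
  linarith

/-- A nonempty fraction `F ⊆ D = {-1,+1}^m` is regular (a coset of a subgroup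
of `D`) if and only if there are a subgroup `L` of `(ZMod 2)^m` and a map
`e : L → {-1,+1}` such that `(1/|L|) ∑_{α ∈ L} e(α) X^α` is the indicator
function of `F`. -/
theorem regular_iff_indicator (m : ℕ) (F : Set (Fin m → ℤˣ)) (hF : F.Nonempty) :
    (∃ (a : Fin m → ℤˣ) (H : Subgroup (Fin m → ℤˣ)),
        F = a • (H : Set (Fin m → ℤˣ))) ↔
    ∃ (L : AddSubgroup (Fin m → ZMod 2)) (e : L → ℤˣ),
      ∀ t : Fin m → ℤˣ,
        (1 / (Nat.card L : ℝ)) *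
            ∑ᶠ α : L, ((e α : ℤ) : ℝ) * ((Xmon (α : Fin m → ZMod 2) t : ℤ) : ℝ) =
          if t ∈ F then 1 else 0 := by
  have hmul_smul : ∀ a t : Fin m → ℤˣ, a • t = a * t := fun a t => funext fun i => Units.ext rfl
  constructor
  · rintro ⟨a, H, rfl⟩
    let ε : (Fin m → ℤˣ) → (Fin m → ZMod 2) := fun t i => epsZ (t i)
    let W : Submodule (ZMod 2) (Fin m → ZMod 2) :=
      { carrier := ε '' H
        add_mem' := by
          rintro x y ⟨u, hu, rfl⟩ ⟨v, hv, rfl⟩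
          exact ⟨u * v, H.mul_mem hu hv, by funext i; simp [ε, Pi.mul_apply, epsZ_add]⟩
        zero_mem' := ⟨1, H.one_mem, by funext i; simp [ε, epsZ_one]⟩
        smul_mem' := by
          intro c x hx
          rcases zmod2_cases_s8 c with rfl | rfl
          · exact ⟨1, H.one_mem, by funext i; simp [ε, epsZ_one]⟩
          · simpa [one_smul] using hx }
    have hmemW : ∀ t : Fin m → ℤˣ, ε t ∈ W ↔ t ∈ H := by
      intro t
      constructor
      · rintro ⟨u, hu, he⟩
        have : u = t := funext fun i => epsZ_inj (congrFun he i)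
        rwa [← this]
      · intro ht; exact ⟨t, ht, rfl⟩
    let Lsub := (Bf m).orthogonal W
    let L := Lsub.toAddSubgroup
    refine ⟨L, fun α => Xmon ↑α a, ?_⟩
    intro t
    have hFt : (t ∈ a • (H : Set (Fin m → ℤˣ))) ↔ ∀ α : L, Xmon (↑α) (a * t) = 1 := by
      rw [Set.mem_smul_set_iff_inv_smul_mem, unit_self_inv, hmul_smul, SetLike.mem_coe,
        ← hmemW,
        ← LinearMap.BilinForm.orthogonal_orthogonal (Bf_nondeg m) (Bf_refl m) W,
        LinearMap.BilinForm.mem_orthogonal_iff]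
      constructor
      · intro h α
        rw [Xmon_eq_one_iff_s8]
        exact h ↑α α.2
      · intro h n hn
        exact (Xmon_eq_one_iff_s8 _ _).mp (h ⟨n, hn⟩)
    haveI : Fintype L := Fintype.ofFinite _
    have hcard : (0:ℝ) < (Nat.card L : ℝ) := by exact_mod_cast Nat.card_pos
    have hfin : (∑ᶠ α : L, ((Xmon (↑α) a : ℤ) : ℝ) * ((Xmon (↑α) t : ℤ) : ℝ))
        = ∑ α : L, ((Xmon (↑α) (a * t) : ℤ) : ℝ) := by
      rw [finsum_eq_sum_of_fintype]
      refine Finset.sum_congr rfl fun α _ => ?_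
      rw [Xmon_mul_right]; push_cast; ring
    by_cases ht : t ∈ a • (H : Set (Fin m → ℤˣ))
    · rw [if_pos ht, hfin]
      have hall := hFt.mp ht
      have h1 : ∀ α ∈ (Finset.univ : Finset L), ((Xmon (↑α) (a * t) : ℤ) : ℝ) = 1 :=
        fun α _ => by rw [hall α]; norm_num
      rw [Finset.sum_congr rfl h1, Finset.sum_const, Finset.card_univ,
        Nat.card_eq_fintype_card, nsmul_eq_mul, mul_one, one_div]
      exact inv_mul_cancel₀ (Nat.cast_ne_zero.mpr Fintype.card_ne_zero)
    · rw [if_neg ht, hfin]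
      have hne : ¬ ∀ α : L, Xmon (↑α) (a * t) = 1 := fun h => ht (hFt.mpr h)
      push_neg at hne
      obtain ⟨α₀, hα₀⟩ := hne
      have hα₀' : Xmon (↑α₀) (a * t) = -1 := by
        rcases Int.units_eq_one_or (Xmon (↑α₀) (a * t)) with h | h
        · exact absurd h hα₀
        · exact h
      set S := ∑ α : L, ((Xmon (↑α) (a * t) : ℤ) : ℝ) with hSdef
      have hS : S = -S := by
        calc S = ∑ α : L, ((Xmon (↑(α₀ + α)) (a * t) : ℤ) : ℝ) :=
              (Fintype.sum_equiv (Equiv.addLeft α₀) _ _ (fun α => rfl)).symm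
          _ = ∑ α : L, -((Xmon (↑α) (a * t) : ℤ) : ℝ) := by
              refine Finset.sum_congr rfl fun α _ => ?_
              rw [AddSubgroup.coe_add, Xmon_add, hα₀']
              push_cast; ring
          _ = -S := by rw [hSdef, ← Finset.sum_neg_distrib]
      have hS0 : S = 0 := by linarith
      rw [hS0, mul_zero]
  · rintro ⟨L, e, hind⟩
    obtain ⟨a, ha⟩ := hF
    haveI : Fintype L := Fintype.ofFinite _
    have hcard : (0:ℝ) < (Nat.card L : ℝ) := by exact_mod_cast Nat.card_pos
    have hconv : ∀ t : Fin m → ℤˣ,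
        (∑ᶠ α : L, ((e α : ℤ) : ℝ) * ((Xmon (↑α) t : ℤ) : ℝ))
          = ∑ α : L, (((e α * Xmon (↑α) t : ℤˣ) : ℤ) : ℝ) := by
      intro t
      rw [finsum_eq_sum_of_fintype]
      refine Finset.sum_congr rfl fun α _ => ?_
      push_cast; ring
    have key : ∀ t : Fin m → ℤˣ, t ∈ F ↔ ∀ α : L, e α * Xmon (↑α) t = 1 := by
      intro t
      have h := hind t
      constructor
      · intro ht
        rw [if_pos ht, one_div, inv_mul_eq_iff_eq_mul₀ (ne_of_gt hcard), mul_one,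
          hconv] at h
        have hS : ∑ α : L, (((e α * Xmon (↑α) t : ℤˣ) : ℤ) : ℝ)
            = ((Finset.univ : Finset L).card : ℝ) := by
          rw [Finset.card_univ, ← Nat.card_eq_fintype_card, ← h]
        exact fun α => sum_pm_eq_card Finset.univ _ hS α (Finset.mem_univ α)
      · intro hall
        by_contra ht
        rw [if_neg ht, hconv] at h
        have h1 : ∀ α ∈ (Finset.univ : Finset L), (((e α * Xmon (↑α) t : ℤˣ) : ℤ) : ℝ) = 1 :=
          fun α _ => by rw [hall α]; norm_num
        rw [Finset.sum_congr rfl h1, Finset.sum_const, Finset.card_univ,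
          Nat.card_eq_fintype_card, nsmul_eq_mul, mul_one, one_div,
          inv_mul_cancel₀ (Nat.cast_ne_zero.mpr (Fintype.card_ne_zero : Fintype.card L ≠ 0))] at h
        exact one_ne_zero h
    have hea : ∀ α : L, e α = Xmon (↑α) a := by
      intro α
      have h := (key a).mp ha α
      have h2 := eq_inv_of_mul_eq_one_left h
      rwa [Int.units_inv_eq_self] at h2
    let Hgrp : Subgroup (Fin m → ℤˣ) :=
      { carrier := {u | ∀ α : L, Xmon (↑α) u = 1}
        mul_mem' := fun hu hv α => by rw [Xmon_mul_right, hu α, hv α, one_mul]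
        one_mem' := fun α => Xmon_one _
        inv_mem' := fun {x} hx => by rw [unit_self_inv]; exact hx }
    refine ⟨a, Hgrp, ?_⟩
    ext t
    rw [key t, Set.mem_smul_set_iff_inv_smul_mem, unit_self_inv, hmul_smul, SetLike.mem_coe]
    have hmem : a * t ∈ Hgrp ↔ ∀ α : L, Xmon (↑α) (a * t) = 1 := Iff.rfl
    rw [hmem]
    constructor
    · intro h α
      rw [Xmon_mul_right, ← hea α]
      exact h α
    · intro h α
      have h2 := h α
      rw [Xmon_mul_right, ← hea α] at h2
      exact h2
end

section
/- A nonempty fraction F ⊆ D = {−1,+1}^m is a coset of a subgroup of D if and only if its vanishing ideal I(F) = {p ∈ ℝ[x_1,…,x_m] : p(t) = 0 for all t ∈ F} (points of D viewed in ℝ^m via ℤˣ → ℝ) is a binomial ideal, i.e. is generated by polynomials of the form x^u − c·x^v with u, v ∈ ℕ^m monomial exponents and c ∈ {−1, +1}. -/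
open Pointwise

open MvPolynomial

namespace RegBin

noncomputable def uc : ℤˣ →* ℝ := (Int.castRingHom ℝ).toMonoidHom.comp (Units.coeHom ℤ)

lemma uc_apply (x : ℤˣ) : uc x = ((x : ℤ) : ℝ) := rfl

lemma uc_inj : Function.Injective uc := fun x y h => by
  apply Units.ext
  have h' : ((x:ℤ):ℝ) = ((y:ℤ):ℝ) := h
  exact_mod_cast h'

lemma uc_ne_zero (x : ℤˣ) : uc x ≠ 0 := by
  rcases Int.units_eq_one_or x with h | h <;> simp [uc_apply, h]

variable {m : ℕ}

/-- character with arbitrary ℕ exponents -/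
def chi (u : Fin m →₀ ℕ) : (Fin m → ℤˣ) →* ℤˣ where
  toFun t := ∏ i, t i ^ u i
  map_one' := by simp
  map_mul' s t := by simp [mul_pow, Finset.prod_mul_distrib]

lemma chi_apply (u : Fin m →₀ ℕ) (t : Fin m → ℤˣ) : chi u t = ∏ i, t i ^ u i := rfl

lemma ev_monomial (t : Fin m → ℤˣ) (u : Fin m →₀ ℕ) (c : ℝ) :
    eval (fun i => ((t i : ℤ) : ℝ)) (monomial u c) = c * uc (chi u t) := by
  rw [eval_monomial]
  congr 1
  rw [Finsupp.prod_fintype _ _ (fun i => pow_zero _), chi_apply, uc_apply]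
  push_cast
  rfl

lemma units_sq (x : ℤˣ) : x * x = 1 := by
  rcases Int.units_eq_one_or x with h | h <;> simp [h]

lemma binom_eval (t : Fin m → ℤˣ) (u v : Fin m →₀ ℕ) (ε : ℤˣ) :
    eval (fun i => ((t i : ℤ) : ℝ)) (monomial u (1:ℝ) - monomial v (uc ε)) = 0 ↔
      chi u t * chi v t = ε := by
  rw [map_sub, ev_monomial, ev_monomial, one_mul, ← map_mul, sub_eq_zero]
  constructor
  · intro h
    have := uc_inj h
    rw [this, mul_assoc, units_sq, mul_one]
  · intro h
    congr 1
    rw [← h, mul_assoc, units_sq, mul_one]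

lemma c_iff (c : ℝ) : (c = 1 ∨ c = -1) ↔ ∃ ε : ℤˣ, c = uc ε := by
  constructor
  · rintro (rfl | rfl)
    exacts [⟨1, by simp [uc_apply]⟩, ⟨-1, by simp [uc_apply]⟩]
  · rintro ⟨ε, rfl⟩
    rcases Int.units_eq_one_or ε with h | h <;> simp [uc_apply, h]

end RegBin

namespace RegBin
variable {m : ℕ}

lemma inv_self (t : Fin m → ℤˣ) : t⁻¹ = t := by
  funext i
  show (t i)⁻¹ = t i
  rcases Int.units_eq_one_or (t i) with h | h <;> simp [h]

lemma psmul_eq_mul (a y : Fin m → ℤˣ) : a • y = a * y := by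
  funext i
  rw [Pi.smul_apply', Pi.mul_apply]
  apply Units.ext
  rw [smul_eq_mul]

lemma backward (F : Set (Fin m → ℤˣ)) (hF : F.Nonempty)
    (I : Ideal (MvPolynomial (Fin m) ℝ))
    (hI : ∀ p : MvPolynomial (Fin m) ℝ,
      p ∈ I ↔ ∀ t ∈ F, MvPolynomial.eval (fun i => ((t i : ℤ) : ℝ)) p = 0)
    (B : Set (MvPolynomial (Fin m) ℝ))
    (hB : ∀ p ∈ B, ∃ (u v : Fin m →₀ ℕ) (c : ℝ), (c = 1 ∨ c = -1) ∧
        p = MvPolynomial.monomial u (1 : ℝ) - MvPolynomial.monomial v c)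
    (hIB : I = Ideal.span B) :
    ∃ (a : Fin m → ℤˣ) (H : Subgroup (Fin m → ℤˣ)),
        F = a • (H : Set (Fin m → ℤˣ)) := by
  obtain ⟨a, haF⟩ := hF
  -- characterize F as common zero set of B
  have hZ : ∀ t : Fin m → ℤˣ,
      t ∈ F ↔ ∀ p ∈ B, MvPolynomial.eval (fun i => ((t i : ℤ) : ℝ)) p = 0 := by
    intro t
    constructor
    · intro ht p hp
      exact (hI p).1 (hIB ▸ Ideal.subset_span hp) t ht
    · intro hv
      by_contra htF
      -- the indicator polynomial of t vanishes on F but not at t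
      set q : MvPolynomial (Fin m) ℝ := ∏ i, (X i + C ((t i : ℤ) : ℝ)) with hq
      have hqF : q ∈ I := by
        rw [hI]
        intro s hs
        have hst : s ≠ t := fun h => htF (h ▸ hs)
        obtain ⟨i, hi⟩ := Function.ne_iff.1 hst
        rw [hq, map_prod]
        apply Finset.prod_eq_zero (Finset.mem_univ i)
        rcases Int.units_eq_one_or (s i) with h1 | h1 <;>
          rcases Int.units_eq_one_or (t i) with h2 | h2 <;>
          simp_all
      have hker : I ≤ RingHom.ker (MvPolynomial.eval (fun i => ((t i : ℤ) : ℝ))) := by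
        rw [hIB, Ideal.span_le]
        intro p hp
        rw [SetLike.mem_coe, RingHom.mem_ker]
        exact hv p hp
      have h0 : MvPolynomial.eval (fun i => ((t i : ℤ) : ℝ)) q = 0 := hker hqF
      rw [hq, map_prod] at h0
      obtain ⟨i, _, hi0⟩ := Finset.prod_eq_zero_iff.1 h0
      rcases Int.units_eq_one_or (t i) with h2 | h2 <;> simp [h2] at hi0
  -- for each binomial, a character equation
  have hchar : ∀ p ∈ B, ∃ (ψ : (Fin m → ℤˣ) →* ℤˣ) (ε : ℤˣ),
      ∀ t : Fin m → ℤˣ, MvPolynomial.eval (fun i => ((t i : ℤ) : ℝ)) p = 0 ↔ ψ t = ε := by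
    intro p hp
    obtain ⟨u, v, c, hc, rfl⟩ := hB p hp
    obtain ⟨ε, rfl⟩ := (c_iff c).1 hc
    refine ⟨chi u * chi v, ε, fun t => ?_⟩
    rw [binom_eval, MonoidHom.mul_apply]
  choose ψ ε hψ using hchar
  refine ⟨a, { carrier := (fun h => a * h) ⁻¹' F
               one_mem' := by simpa using haF
               mul_mem' := ?_
               inv_mem' := ?_ }, ?_⟩
  · rintro h₁ h₂ hh₁ hh₂
    simp only [Set.mem_preimage] at *
    rw [hZ] at hh₁ hh₂ haF ⊢
    intro p hp
    have e1 := (hψ p hp _).1 (hh₁ p hp)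
    have e2 := (hψ p hp _).1 (hh₂ p hp)
    have e0 := (hψ p hp _).1 (haF p hp)
    rw [hψ p hp]
    have key : ψ p hp a * ψ p hp (a * (h₁ * h₂)) = ψ p hp (a * h₁) * ψ p hp (a * h₂) := by
      simp only [map_mul, mul_assoc, mul_comm, mul_left_comm]
    rw [e0, e1, e2] at key
    exact mul_left_cancel key
  · intro h hh
    simpa [inv_self] using hh
  · ext t
    rw [Set.mem_smul_set]
    constructor
    · intro ht
      refine ⟨a⁻¹ * t, ?_, ?_⟩
      · show a * (a⁻¹ * t) ∈ F
        rwa [mul_inv_cancel_left]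
      · rw [psmul_eq_mul, mul_inv_cancel_left]
    · rintro ⟨h, hh, rfl⟩
      rw [psmul_eq_mul]
      exact hh

end RegBin

namespace RegBin
variable {m : ℕ}

/-- squarefree exponent attached to a Boolean vector -/
noncomputable def we (w : Fin m → Bool) : Fin m →₀ ℕ :=
  Finsupp.equivFunOnFinite.symm (fun i => if w i then 1 else 0)

lemma we_apply (w : Fin m → Bool) (i : Fin m) : we w i = if w i then 1 else 0 := rfl

/-- parity reduction of an exponent vector -/
def red (u : Fin m →₀ ℕ) : Fin m → Bool := fun i => decide (u i % 2 = 1)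

lemma chi_red (u : Fin m →₀ ℕ) (t : Fin m → ℤˣ) : chi u t = chi (we (red u)) t := by
  rw [chi_apply, chi_apply]
  refine Finset.prod_congr rfl fun i _ => ?_
  rw [Int.units_pow_eq_pow_mod_two, we_apply]
  rcases Nat.mod_two_eq_zero_or_one (u i) with h | h <;> simp [red, h]

variable (H : Subgroup (Fin m → ℤˣ))

/-- two Boolean vectors are related iff the corresponding characters agree on `H` -/
def hrel : Setoid (Fin m → Bool) :=
  ⟨fun w w' => ∀ h ∈ H, chi (we w) h = chi (we w') h,
    ⟨fun _ _ _ => rfl, fun h1 h hh => (h1 h hh).symm,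
      fun h1 h2 h hh => (h1 h hh).trans (h2 h hh)⟩⟩

noncomputable instance : Fintype (Quotient (hrel H)) :=
  @Quotient.fintype _ _ (hrel H) (fun _ _ => Classical.propDecidable _)

lemma out_rel (w : Fin m → Bool) (h : Fin m → ℤˣ) (hh : h ∈ H) :
    chi (we w) h = chi (we (Quotient.mk (hrel H) w).out) h := by
  have h1 : Quotient.mk (hrel H) ((Quotient.mk (hrel H) w).out) = Quotient.mk (hrel H) w :=
    Quotient.out_eq _
  exact ((Quotient.exact h1 : (hrel H).r _ _) h hh).symm

lemma out_inj {q q' : Quotient (hrel H)}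
    (hqq' : ∀ h ∈ H, chi (we q.out) h = chi (we q'.out) h) : q = q' := by
  rw [← Quotient.out_eq (s := hrel H) q, ← Quotient.out_eq (s := hrel H) q']
  exact Quotient.sound hqq'

noncomputable def LL (d : Quotient (hrel H) → ℝ) : MvPolynomial (Fin m) ℝ :=
  ∑ q, monomial (we q.out) (d q)

lemma LL_add (d d' : Quotient (hrel H) → ℝ) : LL H (d + d') = LL H d + LL H d' := by
  simp [LL, Finset.sum_add_distrib]

lemma LL_zero : LL H (0 : Quotient (hrel H) → ℝ) = 0 := by
  simp [LL]

end RegBin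

namespace RegBin
variable {m : ℕ}




set_option maxHeartbeats 1000000 in
lemma claim2top (H : Subgroup (Fin m → ℤˣ)) (a : Fin m → ℤˣ)
    (d : Quotient (hrel H) → ℝ)
    (hv : ∀ h, h ∈ H → MvPolynomial.eval (fun i => (((a * h) i : ℤ) : ℝ)) (LL H d) = 0) :
    d = 0 := by
  classical
  have einj : Function.Injective
      (fun q : Quotient (hrel H) => uc.comp ((chi (we q.out)).comp H.subtype)) := by
    intro q q' hqq'
    apply out_inj H
    intro h hh
    have h1 := DFunLike.congr_fun hqq' ⟨h, hh⟩
    simp only [MonoidHom.comp_apply] at h1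
    exact uc_inj h1
  have lin := (linearIndependent_monoidHom (↥H) ℝ).comp _ einj
  have hsum : ∑ q, (d q * uc (chi (we q.out) a)) •
      (⇑(uc.comp ((chi (we q.out)).comp H.subtype)) : ↥H → ℝ) = 0 := by
    funext h
    rw [Finset.sum_apply]
    simp only [Pi.smul_apply, smul_eq_mul, Pi.zero_apply, MonoidHom.comp_apply]
    have h0 := hv h h.2
    rw [LL, map_sum] at h0
    rw [← h0]
    refine Finset.sum_congr rfl fun q _ => ?_
    rw [ev_monomial, map_mul, map_mul]
    have hc : H.subtype h = (h : Fin m → ℤˣ) := rfl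
    rw [hc, mul_assoc]
  have hz := Fintype.linearIndependent_iff.1 lin _ hsum
  funext q
  rcases mul_eq_zero.1 (hz q) with h | h
  · exact h
  · exact absurd h (uc_ne_zero _)

set_option maxHeartbeats 2000000 in
lemma forward (F : Set (Fin m → ℤˣ))
    (I : Ideal (MvPolynomial (Fin m) ℝ))
    (hI : ∀ p : MvPolynomial (Fin m) ℝ,
      p ∈ I ↔ ∀ t ∈ F, MvPolynomial.eval (fun i => ((t i : ℤ) : ℝ)) p = 0)
    (a : Fin m → ℤˣ) (H : Subgroup (Fin m → ℤˣ))
    (hFH : F = a • (H : Set (Fin m → ℤˣ))) :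
    ∃ B : Set (MvPolynomial (Fin m) ℝ),
      (∀ p ∈ B, ∃ (u v : Fin m →₀ ℕ) (c : ℝ), (c = 1 ∨ c = -1) ∧
        p = MvPolynomial.monomial u (1 : ℝ) - MvPolynomial.monomial v c) ∧
      I = Ideal.span B := by
  classical
  have memF : ∀ t, t ∈ F ↔ ∃ h ∈ H, t = a * h := by
    intro t
    rw [hFH, Set.mem_smul_set]
    constructor
    · rintro ⟨h, hh, rfl⟩
      exact ⟨h, hh, psmul_eq_mul a h⟩
    · rintro ⟨h, hh, rfl⟩
      exact ⟨h, hh, psmul_eq_mul a h⟩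
  set B : Set (MvPolynomial (Fin m) ℝ) :=
    {p : MvPolynomial (Fin m) ℝ |
      (∃ (u v : Fin m →₀ ℕ) (c : ℝ), (c = 1 ∨ c = -1) ∧
        p = MvPolynomial.monomial u (1 : ℝ) - MvPolynomial.monomial v c) ∧
      ∀ t ∈ F, MvPolynomial.eval (fun i => ((t i : ℤ) : ℝ)) p = 0} with hBdef
  have memB : ∀ (u v : Fin m →₀ ℕ) (ε : ℤˣ), (∀ t ∈ F, chi u t * chi v t = ε) →
      (monomial u (1:ℝ) - monomial v (uc ε)) ∈ B := by
    intro u v ε h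
    exact ⟨⟨u, v, uc ε, (c_iff _).2 ⟨ε, rfl⟩, rfl⟩,
      fun t ht => (binom_eval t u v ε).2 (h t ht)⟩
  refine ⟨B, fun p hp => hp.1, le_antisymm ?_ (Ideal.span_le.2 (fun p hp => (hI p).2 hp.2))⟩
  -- the two families of binomials in B
  have h1 : ∀ u : Fin m →₀ ℕ,
      monomial u (1:ℝ) - monomial (we (red u)) (uc 1) ∈ B := by
    intro u
    apply memB
    intro t _
    rw [← chi_red]
    exact units_sq _
  have h2 : ∀ w : Fin m → Bool,
      monomial (we w) (1:ℝ) -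
        monomial (we (Quotient.mk (hrel H) w).out)
          (uc (chi (we w) a * chi (we (Quotient.mk (hrel H) w).out) a)) ∈ B := by
    intro w
    apply memB
    intro t ht
    obtain ⟨h, hh, rfl⟩ := (memF t).1 ht
    rw [map_mul, map_mul]
    rw [out_rel H w h hh]
    set w' := (Quotient.mk (hrel H) w).out
    calc chi (we w) a * chi (we w') h * (chi (we w') a * chi (we w') h)
        = chi (we w) a * chi (we w') a * (chi (we w') h * chi (we w') h) := by
          simp [mul_assoc, mul_comm, mul_left_comm]
      _ = chi (we w) a * chi (we w') a := by rw [units_sq, mul_one]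
  -- claim 1 : reduction to a normal form
  have claim_m : ∀ (u : Fin m →₀ ℕ) (c : ℝ),
      ∃ d : Quotient (hrel H) → ℝ, monomial u c - LL H d ∈ Ideal.span B := by
    intro u c
    set q0 := Quotient.mk (hrel H) (red u) with hq0
    set ε := chi (we (red u)) a * chi (we q0.out) a with hε
    refine ⟨fun q => if q = q0 then c * uc ε else 0, ?_⟩
    have hLL : LL H (fun q => if q = q0 then c * uc ε else 0) =
        monomial (we q0.out) (c * uc ε) := by
      rw [LL]
      rw [Finset.sum_congr rfl (fun q _ => apply_ite (monomial (we q.out)) (q = q0) _ _)]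
      simp [Finset.sum_ite_eq']
    rw [hLL]
    have key : monomial u c - monomial (we q0.out) (c * uc ε) =
        C c * ((monomial u (1:ℝ) - monomial (we (red u)) (uc 1)) +
          (monomial (we (red u)) (1:ℝ) - monomial (we q0.out) (uc ε))) := by
      rw [map_one uc, sub_add_sub_cancel, mul_sub, C_mul_monomial, C_mul_monomial, mul_one]
    rw [key]
    exact Ideal.mul_mem_left _ _ (Ideal.add_mem _
      (Ideal.subset_span (h1 u)) (Ideal.subset_span (h2 (red u))))
  have claim1 : ∀ p : MvPolynomial (Fin m) ℝ,
      ∃ d : Quotient (hrel H) → ℝ, p - LL H d ∈ Ideal.span B := by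
    intro p
    have hsum : ∀ s : Finset (Fin m →₀ ℕ),
        ∃ d : Quotient (hrel H) → ℝ,
          (∑ u ∈ s, monomial u (MvPolynomial.coeff u p)) - LL H d ∈ Ideal.span B := by
      intro s
      induction s using Finset.induction_on with
      | empty => exact ⟨0, by simp [LL_zero]⟩
      | @insert u0 s hni ih =>
        obtain ⟨d, hd⟩ := ih
        obtain ⟨d', hd'⟩ := claim_m u0 (MvPolynomial.coeff u0 p)
        refine ⟨d' + d, ?_⟩
        rw [Finset.sum_insert hni, LL_add, ← sub_add_sub_comm]
        exact Ideal.add_mem _ hd' hd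
    obtain ⟨d, hd⟩ := hsum p.support
    exact ⟨d, by rwa [← MvPolynomial.as_sum p] at hd⟩
  -- claim 2 : normal forms in I vanish
  have claim2 : ∀ d : Quotient (hrel H) → ℝ, LL H d ∈ I → d = 0 := by
    intro d hdI
    have hv := (hI _).1 hdI
    refine claim2top H a d fun h hh => ?_
    exact hv (a * h) ((memF _).2 ⟨h, hh, rfl⟩)
  -- conclusion
  intro p hp
  obtain ⟨d, hd⟩ := claim1 p
  have hspanle : Ideal.span B ≤ I := Ideal.span_le.2 (fun p hp => (hI p).2 hp.2)
  have hLd : LL H d ∈ I := by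
    have : LL H d = p - (p - LL H d) := by ring
    rw [this]
    exact Ideal.sub_mem _ hp (hspanle hd)
  have hd0 := claim2 d hLd
  rw [hd0, LL_zero, sub_zero] at hd
  exact hd

end RegBin

/-- A nonempty fraction `F ⊆ D = {-1,+1}^m` is regular (a coset of a subgroup
of `D`) if and only if its vanishing ideal
`I(F) = {p ∈ ℝ[x₁,…,x_m] : p(t) = 0 for all t ∈ F}` is a binomial ideal,
i.e. generated by polynomials of the form `x^u - c·x^v` with `c = ±1`. -/
theorem regular_iff_binomial_ideal (m : ℕ) (F : Set (Fin m → ℤˣ)) (hF : F.Nonempty)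
    (I : Ideal (MvPolynomial (Fin m) ℝ))
    (hI : ∀ p : MvPolynomial (Fin m) ℝ,
      p ∈ I ↔ ∀ t ∈ F, MvPolynomial.eval (fun i => ((t i : ℤ) : ℝ)) p = 0) :
    (∃ (a : Fin m → ℤˣ) (H : Subgroup (Fin m → ℤˣ)),
        F = a • (H : Set (Fin m → ℤˣ))) ↔
    ∃ B : Set (MvPolynomial (Fin m) ℝ),
      (∀ p ∈ B, ∃ (u v : Fin m →₀ ℕ) (c : ℝ), (c = 1 ∨ c = -1) ∧
        p = MvPolynomial.monomial u (1 : ℝ) - MvPolynomial.monomial v c) ∧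
      I = Ideal.span B := by
  constructor
  · rintro ⟨a, H, hFH⟩
    exact RegBin.forward F I hI a H hFH
  · rintro ⟨B, hB, hIB⟩
    exact RegBin.backward F hF I hI B hB hIB
end

section
/- (Inclusion criterion for a regular fraction.) Let F ⊆ D = {−1,+1}^m be a fraction with indicator coefficients b_β = 2^{−m} · Σ_{t ∈ F} (X^β(t) : ℝ). Let α_1, …, α_k ∈ Fin m → ZMod 2 be linearly independent over ZMod 2, let e_1, …, e_k ∈ {−1,+1}, and let R = {t ∈ D : X^{α_j}(t) = e_j for all j = 1,…,k} be the corresponding regular fraction. Then R ⊆ F if and only if Σ_{S ⊆ {1,…,k}} (∏_{j ∈ S} e_j) · b_{Σ_{j ∈ S} α_j} = 1, where the sum runs over all subsets S of {1,…,k} (the empty set contributing b_0) and Σ_{j ∈ S} α_j is computed in (ZMod 2)^m. -/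
namespace RegularFractionAux

/-- The sign map `ℤˣ → ZMod 2`, sending `1 ↦ 0` and `-1 ↦ 1`. -/
def sgn (u : ℤˣ) : ZMod 2 := if u = 1 then 0 else 1

lemma sgn_injective : Function.Injective sgn := by
  intro u v h
  rcases Int.units_eq_one_or u with rfl | rfl <;>
    rcases Int.units_eq_one_or v with rfl | rfl <;> simp_all [sgn]

lemma sgn_one : sgn 1 = 0 := rfl

lemma sgn_mul (u v : ℤˣ) : sgn (u * v) = sgn u + sgn v := by
  rcases Int.units_eq_one_or u with rfl | rfl <;>
    rcases Int.units_eq_one_or v with rfl | rfl <;> simp [sgn] <;> decide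

lemma sgn_prod {ι : Type*} (s : Finset ι) (f : ι → ℤˣ) :
    sgn (∏ i ∈ s, f i) = ∑ i ∈ s, sgn (f i) := by
  classical
  induction s using Finset.cons_induction with
  | empty => simp [sgn_one]
  | cons a s ha ih => rw [Finset.prod_cons, Finset.sum_cons, sgn_mul, ih]

lemma zmod2_cases (a : ZMod 2) : a = 0 ∨ a = 1 := by revert a; decide

variable {m k : ℕ}

lemma sgn_Xmon (γ : Fin m → ZMod 2) (t : Fin m → ℤˣ) :
    sgn (Xmon γ t) = ∑ i, γ i * sgn (t i) := by
  rw [Xmon, sgn_prod, Finset.sum_filter]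
  refine Finset.sum_congr rfl fun i _ => ?_
  rcases zmod2_cases (γ i) with h | h <;> simp [h]

lemma Xmon_sum (S : Finset (Fin k)) (α : Fin k → Fin m → ZMod 2) (t : Fin m → ℤˣ) :
    Xmon (∑ j ∈ S, α j) t = ∏ j ∈ S, Xmon (α j) t := by
  apply sgn_injective
  rw [sgn_prod, sgn_Xmon]
  simp only [sgn_Xmon, Finset.sum_apply, Finset.sum_mul]
  exact Finset.sum_comm

/-- The evaluation map. -/
def Lmap (α : Fin k → Fin m → ZMod 2) (x : Fin m → ZMod 2) : Fin k → ZMod 2 :=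
  fun j => ∑ i, α j i * x i

lemma Lmap_add (α : Fin k → Fin m → ZMod 2) (x y : Fin m → ZMod 2) :
    Lmap α (x + y) = Lmap α x + Lmap α y := by
  funext j
  simp [Lmap, mul_add, Finset.sum_add_distrib]

/-- Surjectivity of the evaluation map from linear independence. -/
lemma eval_surj (α : Fin k → Fin m → ZMod 2) (hα : LinearIndependent (ZMod 2) α)
    (c : Fin k → ZMod 2) : ∃ x : Fin m → ZMod 2, Lmap α x = c := by
  classical
  set W := Submodule.span (ZMod 2) (Set.range α)
  let B : Module.Basis (Fin k) (ZMod 2) W := Module.Basis.span hα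
  let f₀ : W →ₗ[ZMod 2] ZMod 2 := B.constr (ZMod 2) c
  obtain ⟨f, hf⟩ := LinearMap.exists_extend f₀
  refine ⟨fun i => f (Pi.single i 1), funext fun j => ?_⟩
  have hαW : α j ∈ W := Submodule.subset_span ⟨j, rfl⟩
  have h1 : f (α j) = c j := by
    have h2 : (f ∘ₗ W.subtype) ⟨α j, hαW⟩ = f₀ ⟨α j, hαW⟩ := by rw [hf]
    have hB : (⟨α j, hαW⟩ : W) = B j := (Module.Basis.span_apply hα j).symm
    have h3 : f₀ (B j) = c j := by simp [f₀]
    rw [hB] at h2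
    have : f (α j) = (f ∘ₗ W.subtype) (B j) := by rw [← hB]; rfl
    rw [this, h2, h3]
  calc Lmap α (fun i => f (Pi.single i 1)) j
      = f (∑ i, α j i • Pi.single i 1) := by
        rw [map_sum]
        simp [Lmap, smul_eq_mul, mul_comm]
    _ = f (α j) := by
        congr 1
        ext i'
        simp [Finset.sum_apply, Pi.single_apply, mul_ite]
    _ = c j := h1

lemma fib_card_eq (α : Fin k → Fin m → ZMod 2)
    (hs : ∀ c, ∃ x, Lmap α x = c) (c c' : Fin k → ZMod 2) :
    (Finset.univ.filter (fun x => Lmap α x = c)).card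
      = (Finset.univ.filter (fun x => Lmap α x = c')).card := by
  classical
  obtain ⟨x₀, hx₀⟩ := hs c
  obtain ⟨x₁, hx₁⟩ := hs c'
  refine Finset.card_bij' (fun x _ => x + (x₁ - x₀)) (fun x _ => x + (x₀ - x₁)) ?_ ?_ ?_ ?_
  · intro a ha
    simp only [Finset.mem_filter, Finset.mem_univ, true_and] at ha ⊢
    rw [show a + (x₁ - x₀) = a + x₁ + (-x₀) by ring, Lmap_add, Lmap_add, ha, hx₁]
    have : Lmap α x₀ + Lmap α (-x₀) = 0 := by
      rw [← Lmap_add, add_neg_cancel]; funext j; simp [Lmap]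
    rw [hx₀] at this
    funext j
    have := congrFun this j
    simp only [Pi.add_apply, Pi.zero_apply] at this ⊢
    linear_combination this
  · intro a ha
    simp only [Finset.mem_filter, Finset.mem_univ, true_and] at ha ⊢
    rw [show a + (x₀ - x₁) = a + x₀ + (-x₁) by ring, Lmap_add, Lmap_add, ha, hx₀]
    have : Lmap α x₁ + Lmap α (-x₁) = 0 := by
      rw [← Lmap_add, add_neg_cancel]; funext j; simp [Lmap]
    rw [hx₁] at this
    funext j
    have := congrFun this j
    simp only [Pi.add_apply, Pi.zero_apply] at this ⊢
    linear_combination this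
  · intro a _; ring
  · intro a _; ring

lemma fib_card_mul (α : Fin k → Fin m → ZMod 2)
    (hs : ∀ c, ∃ x, Lmap α x = c) (c : Fin k → ZMod 2) :
    (Finset.univ.filter (fun x => Lmap α x = c)).card * 2 ^ k = 2 ^ m := by
  classical
  have h := Finset.card_eq_sum_card_fiberwise
    (f := Lmap α) (s := (Finset.univ : Finset (Fin m → ZMod 2)))
    (t := (Finset.univ : Finset (Fin k → ZMod 2))) (fun x _ => Finset.mem_univ _)
  rw [Finset.card_univ] at h
  have hconst : ∀ c' ∈ (Finset.univ : Finset (Fin k → ZMod 2)),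
      (Finset.univ.filter (fun x => Lmap α x = c')).card
        = (Finset.univ.filter (fun x => Lmap α x = c)).card :=
    fun c' _ => fib_card_eq α hs c' c
  rw [Finset.sum_congr rfl hconst, Finset.sum_const, Finset.card_univ, smul_eq_mul] at h
  simp only [Fintype.card_fun, ZMod.card, Fintype.card_fin] at h
  rw [h]; ring

/-- Transfer the count of the regular fraction to the `ZMod 2` side. -/
lemma card_R_eq (α : Fin k → Fin m → ZMod 2) (e : Fin k → ℤˣ) :
    (Finset.univ.filter (fun t : Fin m → ℤˣ => ∀ j, Xmon (α j) t = e j)).card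
      = (Finset.univ.filter (fun x => Lmap α x = fun j => sgn (e j))).card := by
  classical
  have hsi : ∀ (c : ZMod 2), sgn (if c = 0 then 1 else -1) = c := by decide
  have his : ∀ (u : ℤˣ), (if sgn u = 0 then 1 else -1) = u := by decide
  refine Finset.card_bij' (fun t _ => fun i => sgn (t i))
    (fun x _ => fun i => if x i = 0 then 1 else -1) ?_ ?_ ?_ ?_
  · intro t ht
    simp only [Finset.mem_filter, Finset.mem_univ, true_and] at ht ⊢
    funext j
    rw [Lmap, ← sgn_Xmon, ht j]
  · intro x hx
    simp only [Finset.mem_filter, Finset.mem_univ, true_and] at hx ⊢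
    intro j
    apply sgn_injective
    rw [sgn_Xmon]
    have : ∀ i, sgn (if x i = 0 then 1 else (-1 : ℤˣ)) = x i := fun i => hsi (x i)
    simp only [this]
    exact congrFun hx j
  · intro t _
    funext i
    exact his (t i)
  · intro x _
    funext i
    exact hsi (x i)

lemma units_val_prod {ι : Type*} (s : Finset ι) (f : ι → ℤˣ) :
    ((∏ i ∈ s, f i : ℤˣ) : ℤ) = ∏ i ∈ s, ((f i : ℤ)) :=
  map_prod (Units.coeHom ℤ) f s

lemma factor_eq (u v : ℤˣ) :
    ((u : ℤ) : ℝ) * ((v : ℤ) : ℝ) + 1 = if v = u then 2 else 0 := by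
  rcases Int.units_eq_one_or u with rfl | rfl <;>
    rcases Int.units_eq_one_or v with rfl | rfl <;> norm_num

end RegularFractionAux

open RegularFractionAux in
/-- Inclusion criterion for a regular fraction: with indicator coefficients
`b_β = 2^{-m} ∑_{t ∈ F} X^β(t)`, and `α_1, …, α_k` linearly independent, the
regular fraction `R = {t : X^{α_j}(t) = e_j for all j}` satisfies `R ⊆ F` if and
only if `∑_{S ⊆ {1,…,k}} (∏_{j ∈ S} e_j) b_{∑_{j ∈ S} α_j} = 1`. -/
theorem regular_subset_iff (m k : ℕ) (F : Finset (Fin m → ℤˣ))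
    (b : (Fin m → ZMod 2) → ℝ)
    (hb : ∀ β, b β = (1 / 2 ^ m : ℝ) * ∑ t ∈ F, ((Xmon β t : ℤ) : ℝ))
    (α : Fin k → Fin m → ZMod 2) (hα : LinearIndependent (ZMod 2) α)
    (e : Fin k → ℤˣ) :
    {t : Fin m → ℤˣ | ∀ j, Xmon (α j) t = e j} ⊆ (F : Set (Fin m → ℤˣ)) ↔
      ∑ S : Finset (Fin k), (∏ j ∈ S, ((e j : ℤ) : ℝ)) * b (∑ j ∈ S, α j) = 1 := by
  classical
  set P : (Fin m → ℤˣ) → Prop := fun t => ∀ j, Xmon (α j) t = e j with hP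
  set N : ℕ := (Finset.univ.filter (fun x => Lmap α x = fun j => sgn (e j))).card with hN
  have hsurj : ∀ c, ∃ x, Lmap α x = c := eval_surj α hα
  have hN2 : N * 2 ^ k = 2 ^ m := fib_card_mul α hsurj _
  have hRcard : (Finset.univ.filter P).card = N := card_R_eq α e
  -- Step 1: compute the sum.
  have hsum : ∑ S : Finset (Fin k), (∏ j ∈ S, ((e j : ℤ) : ℝ)) * b (∑ j ∈ S, α j)
      = (1 / 2 ^ m : ℝ) * (2 ^ k * ((F.filter P).card : ℝ)) := by
    have step1 : ∑ S : Finset (Fin k), (∏ j ∈ S, ((e j : ℤ) : ℝ)) * b (∑ j ∈ S, α j)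
        = ∑ S : Finset (Fin k), ∑ t ∈ F, (1 / 2 ^ m : ℝ) *
            ∏ j ∈ S, (((e j : ℤ) : ℝ) * ((Xmon (α j) t : ℤ) : ℝ)) := by
      refine Finset.sum_congr rfl fun S _ => ?_
      rw [hb]
      simp only [Xmon_sum, units_val_prod, Int.cast_prod, Finset.prod_mul_distrib,
        Finset.mul_sum]
      exact Finset.sum_congr rfl fun t _ => by ring
    rw [step1, Finset.sum_comm]
    have step2 : ∀ t : Fin m → ℤˣ,
        ∑ S : Finset (Fin k), ∏ j ∈ S, (((e j : ℤ) : ℝ) * ((Xmon (α j) t : ℤ) : ℝ))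
          = if P t then (2 : ℝ) ^ k else 0 := by
      intro t
      have expand : ∏ j : Fin k, ((((e j : ℤ) : ℝ) * ((Xmon (α j) t : ℤ) : ℝ)) + 1)
          = ∑ S ∈ (Finset.univ : Finset (Fin k)).powerset,
              (∏ j ∈ S, (((e j : ℤ) : ℝ) * ((Xmon (α j) t : ℤ) : ℝ)))
                * ∏ j ∈ Finset.univ \ S, (1 : ℝ) := Finset.prod_add _ _ _
      simp only [Finset.prod_const_one, mul_one, Finset.powerset_univ] at expand
      rw [← expand]
      by_cases h : P t
      · have : ∀ j : Fin k, (((e j : ℤ) : ℝ) * ((Xmon (α j) t : ℤ) : ℝ)) + 1 = 2 := by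
          intro j
          rw [factor_eq]
          simp [h j]
        rw [Finset.prod_congr rfl fun j _ => this j, Finset.prod_const, Finset.card_univ,
          Fintype.card_fin, if_pos h]
      · rw [if_neg h]
        have h' : ∃ j, Xmon (α j) t ≠ e j := by
          by_contra hc
          push_neg at hc
          exact h hc
        obtain ⟨j, hj⟩ := h'
        refine Finset.prod_eq_zero (Finset.mem_univ j) ?_
        rw [factor_eq, if_neg hj]
    have step3 : ∑ t ∈ F, ∑ S : Finset (Fin k), (1 / 2 ^ m : ℝ) *
        ∏ j ∈ S, (((e j : ℤ) : ℝ) * ((Xmon (α j) t : ℤ) : ℝ))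
        = (1 / 2 ^ m : ℝ) * ∑ t ∈ F, if P t then (2 : ℝ) ^ k else 0 := by
      rw [Finset.mul_sum]
      refine Finset.sum_congr rfl fun t _ => ?_
      rw [← Finset.mul_sum, step2 t]
    rw [step3, Finset.sum_ite, Finset.sum_const_zero, add_zero, Finset.sum_const,
      nsmul_eq_mul]
    ring
  rw [hsum]
  -- Step 2: the arithmetic equivalence.
  have h2m : ((2 : ℝ) ^ m) ≠ 0 := by positivity
  have harith : (1 / 2 ^ m : ℝ) * (2 ^ k * ((F.filter P).card : ℝ)) = 1
      ↔ (F.filter P).card = N := by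
    rw [one_div, inv_mul_eq_div, div_eq_one_iff_eq h2m]
    constructor
    · intro h
      have hnat : 2 ^ k * (F.filter P).card = 2 ^ m := by
        exact_mod_cast h
      have : 2 ^ k * (F.filter P).card = 2 ^ k * N := by rw [hnat, ← hN2]; ring
      exact Nat.eq_of_mul_eq_mul_left (by positivity) this
    · intro h
      rw [h]
      exact_mod_cast congrArg (Nat.cast (R := ℝ))
        (show 2 ^ k * N = 2 ^ m by rw [mul_comm]; exact hN2)
  rw [harith]
  -- Step 3: inclusion iff card.
  constructor
  · intro hincl
    have hsub1 : Finset.univ.filter P ⊆ F.filter P := by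
      intro t ht
      rw [Finset.mem_filter] at ht ⊢
      exact ⟨hincl ht.2, ht.2⟩
    have hsub2 : F.filter P ⊆ Finset.univ.filter P := by
      intro t ht
      rw [Finset.mem_filter] at ht ⊢
      exact ⟨Finset.mem_univ _, ht.2⟩
    rw [← hRcard]
    exact Nat.le_antisymm (Finset.card_le_card hsub2) (Finset.card_le_card hsub1)
  · intro hcard
    have hsub2 : F.filter P ⊆ Finset.univ.filter P := by
      intro t ht
      rw [Finset.mem_filter] at ht ⊢
      exact ⟨Finset.mem_univ _, ht.2⟩
    have heq : F.filter P = Finset.univ.filter P :=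
      Finset.eq_of_subset_of_card_le hsub2 (by rw [hRcard, hcard])
    intro t ht
    have : t ∈ Finset.univ.filter P := by
      rw [Finset.mem_filter]
      exact ⟨Finset.mem_univ _, ht⟩
    rw [← heq, Finset.mem_filter] at this
    exact this.1
end
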